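/- Let M be a K×K Hermitian positive definite complex matrix. Then the minimum of f(A, D) = Tr(Aᴴ Dᴴ M D A) over all upper unitriangular complex matrices A and all diagonal complex matrices D with |det D| = 1 equals K · (det M)^{1/K}. The minimum is attained at D̃ = (det Λ)^{1/(2K)} Λ^{-1/2} and Ã = Λ^{1/2} U⁻¹ Λ^{-1/2}, where M = Uᴴ Λ U is the LDL decomposition of M. -/

import Mathlib

open Matrix ComplexOrder

/-- An upper unitriangular matrix: upper triangular with ones on the diagonal. -/
def UpperUnitri {K : ℕ} (A : Matrix (Fin K) (Fin K) ℂ) : Prop :=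
  (∀ i j : Fin K, j < i → A i j = 0) ∧ ∀ i : Fin K, A i i = 1

lemma trace_eq_sum_eig {n : Type*} [Fintype n] [DecidableEq n] {A : Matrix n n ℂ}
    (hA : A.IsHermitian) : A.trace = ∑ i, (hA.eigenvalues i : ℂ) := by
  exact hA.trace_eq_sum_eigenvalues

lemma posDef_conj {n : Type*} [Fintype n] [DecidableEq n] {A B : Matrix n n ℂ}
    (hA : A.PosDef) (hB : IsUnit B.det) : (Bᴴ * A * B).PosDef := by
  refine Matrix.PosDef.of_dotProduct_mulVec_pos (Matrix.isHermitian_conjTranspose_mul_mul B hA.1) fun x hx => ?_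
  have hBx : B *ᵥ x ≠ 0 := by
    have := (Matrix.mulVec_injective_iff_isUnit.mpr ((Matrix.isUnit_iff_isUnit_det B).mpr hB))
    intro h
    exact hx (this (by simpa using h))
  have := hA.dotProduct_mulVec_pos hBx
  simpa only [star_mulVec, Matrix.dotProduct_mulVec, Matrix.vecMul_vecMul] using this

/-- the minimum of Tr(Aᴴ Dᴴ M D A) over upper unitriangular A and
diagonal D with |det D| = 1 equals K (det M)^{1/K}, attained at
D̃ = (det Λ)^{1/(2K)} Λ^{-1/2} and Ã = Λ^{1/2} U⁻¹ Λ^{-1/2}. -/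
theorem stmt_6 {K : ℕ} (hK : 0 < K) (M U Λ : Matrix (Fin K) (Fin K) ℂ)
    (lam : Fin K → ℝ) (hM : M.PosDef)
    (hU : UpperUnitri U) (hΛ : Λ = Matrix.diagonal fun i => ((lam i : ℝ) : ℂ))
    (hlam : ∀ i : Fin K, 0 < lam i)
    (hdec : M = Uᴴ * Λ * U)
    (Dt At : Matrix (Fin K) (Fin K) ℂ)
    (hDt : Dt = Matrix.diagonal fun i =>
      (((∏ j : Fin K, lam j) ^ ((1 : ℝ) / (2 * K)) / Real.sqrt (lam i) : ℝ) : ℂ))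
    (hAt : At = (Matrix.diagonal fun i => ((Real.sqrt (lam i) : ℝ) : ℂ)) * U⁻¹ *
      (Matrix.diagonal fun i => (((Real.sqrt (lam i))⁻¹ : ℝ) : ℂ))) :
    UpperUnitri At ∧ Dt.IsDiag ∧ ‖Dt.det‖ = 1 ∧
    (Atᴴ * Dtᴴ * M * Dt * At).trace = (((K : ℝ) * M.det.re ^ ((1 : ℝ) / K) : ℝ) : ℂ) ∧
    ∀ A D : Matrix (Fin K) (Fin K) ℂ,
      UpperUnitri A → D.IsDiag → ‖D.det‖ = 1 →
      (K : ℝ) * M.det.re ^ ((1 : ℝ) / K) ≤ (Aᴴ * Dᴴ * M * D * A).trace.re := by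
  have hKR : (0:ℝ) < (K:ℝ) := by exact_mod_cast hK
  set P : ℝ := ∏ j : Fin K, lam j with hPdef
  have hP : 0 < P := Finset.prod_pos fun i _ => hlam i
  set s : Fin K → ℝ := fun i => Real.sqrt (lam i) with hsdef
  have hspos : ∀ i, 0 < s i := fun i => Real.sqrt_pos.mpr (hlam i)
  have hs : ∀ i, s i ≠ 0 := fun i => (hspos i).ne'
  set c : ℝ := P ^ ((1:ℝ) / (2 * K)) with hcdef
  have hc : 0 < c := Real.rpow_pos_of_pos hP _
  -- determinant of U
  have hUtri : U.BlockTriangular id := fun i j h => hU.1 i j h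
  have hUdet : U.det = 1 := by
    rw [Matrix.det_of_upperTriangular hUtri]
    exact Finset.prod_eq_one fun i _ => hU.2 i
  have hUunit : IsUnit U.det := by rw [hUdet]; exact isUnit_one
  haveI : Invertible U := U.invertibleOfIsUnitDet hUunit
  -- det Λ and det M
  have hΛdet : Λ.det = (P : ℂ) := by
    rw [hΛ, Matrix.det_diagonal, hPdef, Complex.ofReal_prod]
  have hMdet : M.det = (P : ℂ) := by
    rw [hdec, Matrix.det_mul, Matrix.det_mul, Matrix.det_conjTranspose, hUdet, hΛdet]
    simp
  have hMre : M.det.re = P := by rw [hMdet]; simp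
  have hΛpd : Λ.PosDef := by
    rw [hΛ]
    exact Matrix.PosDef.diagonal fun i => by exact_mod_cast hlam i
  -- conjugation identity
  have hconj : ∀ D A : Matrix (Fin K) (Fin K) ℂ,
      Aᴴ * Dᴴ * M * D * A = (U * D * A)ᴴ * Λ * (U * D * A) := by
    intro D A
    rw [hdec]
    simp only [Matrix.conjTranspose_mul, Matrix.mul_assoc]
  -- U⁻¹ is upper unitriangular
  have hUinvtri : U⁻¹.BlockTriangular id := Matrix.blockTriangular_inv_of_blockTriangular hUtri
  have hUinvdiag : ∀ i, U⁻¹ i i = 1 := by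
    intro i
    have h1 : (U * U⁻¹) i i = 1 := by
      rw [Matrix.mul_nonsing_inv U hUunit]; simp
    rw [Matrix.mul_apply] at h1
    rw [Finset.sum_eq_single i] at h1
    · rwa [hU.2 i, one_mul] at h1
    · intro j _ hj
      rcases lt_or_gt_of_ne hj with h | h
      · rw [hU.1 i j h, zero_mul]
      · rw [hUinvtri h, mul_zero]
    · exact fun h => absurd (Finset.mem_univ i) h
  -- entrywise formula for At
  have hAtapply : ∀ i j, At i j = (s i : ℂ) * U⁻¹ i j * (((s j)⁻¹ : ℝ) : ℂ) := by
    intro i j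
    rw [hAt, Matrix.mul_diagonal, Matrix.diagonal_mul]
  have hAtUni : UpperUnitri At := by
    constructor
    · intro i j h
      rw [hAtapply, hUinvtri h]
      ring
    · intro i
      rw [hAtapply, hUinvdiag i, mul_one, ← Complex.ofReal_mul, mul_inv_cancel₀ (hs i),
        Complex.ofReal_one]
  refine ⟨hAtUni, by rw [hDt]; exact Matrix.isDiag_diagonal _, ?_, ?_, ?_⟩
  · -- |det Dt| = 1
    have hprod : ∏ i : Fin K, (c / Real.sqrt (lam i)) = 1 := by
      rw [Finset.prod_div_distrib, Finset.prod_const, Finset.card_univ, Fintype.card_fin]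
      have h1 : c ^ K = P ^ ((1:ℝ)/2) := by
        rw [hcdef, ← Real.rpow_natCast (P ^ ((1:ℝ)/(2*K))) K, ← Real.rpow_mul hP.le]
        congr 1
        field_simp
      have h2 : ∏ i : Fin K, Real.sqrt (lam i) = P ^ ((1:ℝ)/2) := by
        simp_rw [Real.sqrt_eq_rpow]
        rw [Real.finset_prod_rpow _ _ (fun i _ => (hlam i).le), hPdef]
      rw [h1, h2, div_self (Real.rpow_pos_of_pos hP _).ne']
    rw [hDt, Matrix.det_diagonal, ← Complex.ofReal_prod, hprod]
    simp
  · -- trace at the minimizer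
    set S : Matrix (Fin K) (Fin K) ℂ :=
      Matrix.diagonal fun i => ((Real.sqrt (lam i) : ℝ) : ℂ) with hS
    set S' : Matrix (Fin K) (Fin K) ℂ :=
      Matrix.diagonal fun i => (((Real.sqrt (lam i))⁻¹ : ℝ) : ℂ) with hS'
    have hDt' : Dt = (c:ℂ) • S' := by
      rw [hDt, hS', ← Matrix.diagonal_smul]
      refine congrArg Matrix.diagonal (funext fun i => ?_)
      simp [div_eq_mul_inv]
    have hS'S : S' * S = 1 := by
      rw [hS, hS', Matrix.diagonal_mul_diagonal, ← Matrix.diagonal_one]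
      refine congrArg Matrix.diagonal (funext fun i => ?_)
      rw [← Complex.ofReal_mul, inv_mul_cancel₀ (hs i), Complex.ofReal_one]
    have hB : U * Dt * At = (c:ℂ) • S' := by
      rw [hDt', hAt]
      rw [Matrix.mul_smul, Matrix.smul_mul]
      congr 1
      calc U * S' * (S * U⁻¹ * S') = U * (S' * S) * (U⁻¹ * S') := by
            simp only [Matrix.mul_assoc]
        _ = S' := by
            rw [hS'S, Matrix.mul_one, ← Matrix.mul_assoc,
              Matrix.mul_nonsing_inv U hUunit, one_mul]
    have hS'H : S'ᴴ = S' := by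
      rw [hS', Matrix.diagonal_conjTranspose]
      refine congrArg Matrix.diagonal (funext fun i => ?_)
      simp [Complex.conj_ofReal]
    have hSΛS : S' * Λ * S' = 1 := by
      rw [hS', hΛ, Matrix.diagonal_mul_diagonal, Matrix.diagonal_mul_diagonal,
        ← Matrix.diagonal_one]
      refine congrArg Matrix.diagonal (funext fun i => ?_)
      rw [← Complex.ofReal_mul, ← Complex.ofReal_mul]
      norm_cast
      rw [← Real.mul_self_sqrt (hlam i).le]
      field_simp
      rw [Real.sqrt_sq (Real.sqrt_nonneg _)]
      exact div_self (pow_ne_zero 2 (Real.sqrt_ne_zero'.mpr (hlam i)))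
    have hmat : ((c:ℂ) • S')ᴴ * Λ * ((c:ℂ) • S') = ((c * c : ℝ) : ℂ) • (1 : Matrix (Fin K) (Fin K) ℂ) := by
      rw [Matrix.conjTranspose_smul, hS'H, Complex.star_def, Complex.conj_ofReal]
      simp only [Matrix.smul_mul, Matrix.mul_smul, smul_smul]
      rw [hSΛS, Complex.ofReal_mul]
    have hcc : c * c = P ^ ((1:ℝ)/K) := by
      rw [hcdef, ← Real.rpow_add hP]
      congr 1
      rw [← add_div, mul_comm, ← div_div, div_right_comm]
      norm_num
    rw [hconj Dt At, hB, hmat, Matrix.trace_smul, Matrix.trace_one, hMre, smul_eq_mul, hcc]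
    push_cast [Fintype.card_fin]
    ring
  · -- lower bound
    intro A D hA hD hDdet
    have hAdet : A.det = 1 := by
      rw [Matrix.det_of_upperTriangular (fun i j h => hA.1 i j h)]
      exact Finset.prod_eq_one fun i _ => hA.2 i
    have hDne : D.det ≠ 0 := fun h => by simp [h] at hDdet
    set B := U * D * A with hBdef
    have hBdet : B.det = D.det := by
      rw [hBdef, Matrix.det_mul, Matrix.det_mul, hUdet, hAdet, one_mul, mul_one]
    have hBunit : IsUnit B.det := by
      rw [hBdet]; exact isUnit_iff_ne_zero.mpr hDne
    have hN : (Bᴴ * Λ * B).PosDef := posDef_conj hΛpd hBunit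
    have hNdet : (Bᴴ * Λ * B).det = (P:ℂ) := by
      rw [Matrix.det_mul, Matrix.det_mul, Matrix.det_conjTranspose, hΛdet, hBdet]
      have h1 : star D.det * D.det = 1 := by
        rw [Complex.star_def, mul_comm, Complex.mul_conj, Complex.normSq_eq_norm_sq, hDdet]
        norm_num
      rw [mul_comm (star D.det) ((P:ℂ)), mul_assoc, h1, mul_one]
    have heig : ∀ i, 0 < hN.1.eigenvalues i := hN.eigenvalues_pos
    have hprodeig : ∏ i, hN.1.eigenvalues i = P := by
      have h2 := hN.1.det_eq_prod_eigenvalues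
      rw [hNdet, ← RCLike.ofReal_prod] at h2
      exact RCLike.ofReal_inj.mp h2.symm
    have htr : (Bᴴ * Λ * B).trace.re = ∑ i, hN.1.eigenvalues i := by
      rw [trace_eq_sum_eig hN.1]
      norm_cast
    have hw : ∑ _i : Fin K, (1:ℝ)/K = 1 := by
      rw [Finset.sum_const, Finset.card_univ, Fintype.card_fin, nsmul_eq_mul,
        mul_one_div, div_self hKR.ne']
    have key := Real.geom_mean_le_arith_mean_weighted Finset.univ (fun _ => (1:ℝ)/K)
      hN.1.eigenvalues (fun _ _ => by positivity) hw (fun i _ => (heig i).le)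
    rw [Real.finset_prod_rpow _ _ (fun i _ => (heig i).le), hprodeig, ← Finset.mul_sum] at key
    have key2 := mul_le_mul_of_nonneg_left key hKR.le
    rw [hconj D A, htr, hMre]
    calc (K:ℝ) * P ^ ((1:ℝ)/K) ≤ (K:ℝ) * ((1/K) * ∑ i, hN.1.eigenvalues i) := key2
      _ = ∑ i, hN.1.eigenvalues i := by field_simp
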